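/- (Finsler's lemma) For symmetric matrices A, B ∈ R^{n×n}, the following are equivalent: (i) for every nonzero x with x^T B x = 0 one has x^T A x > 0; (ii) there exists μ ∈ R such that A + μB is positive definite. -/

import Mathlib

open Matrix

private lemma qf_cont {n : ℕ} (M : Matrix (Fin n) (Fin n) ℝ) :
    Continuous fun x : Fin n → ℝ => x ⬝ᵥ M.mulVec x := by
  unfold dotProduct mulVec
  exact continuous_finset_sum _ fun i _ => (continuous_apply i).mul
    (continuous_finset_sum _ fun j _ => (continuous_const.mul (continuous_apply j)))

private lemma qf_smul {n : ℕ} (M : Matrix (Fin n) (Fin n) ℝ) (c : ℝ) (x : Fin n → ℝ) :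
    (c • x) ⬝ᵥ M.mulVec (c • x) = c^2 * (x ⬝ᵥ M.mulVec x) := by
  rw [M.mulVec_smul, smul_dotProduct, dotProduct_smul, smul_eq_mul, smul_eq_mul]; ring

private lemma qf_sym {n : ℕ} (M : Matrix (Fin n) (Fin n) ℝ) (hM : Mᵀ = M) (x y : Fin n → ℝ) :
    x ⬝ᵥ M.mulVec y = y ⬝ᵥ M.mulVec x := by
  rw [dotProduct_mulVec, ← hM, vecMul_transpose, dotProduct_comm, hM]

private lemma qf_expand {n : ℕ} (M : Matrix (Fin n) (Fin n) ℝ) (a c : ℝ) (x y : Fin n → ℝ) :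
    (a • x + c • y) ⬝ᵥ M.mulVec (a • x + c • y)
      = a^2 * (x ⬝ᵥ M.mulVec x) + a*c*(x ⬝ᵥ M.mulVec y) + a*c*(y ⬝ᵥ M.mulVec x)
        + c^2 * (y ⬝ᵥ M.mulVec y) := by
  simp only [mulVec_add, mulVec_smul, dotProduct_add, add_dotProduct, dotProduct_smul,
    smul_dotProduct, smul_eq_mul]
  ring

private lemma qf_addsmul {n : ℕ} (A B : Matrix (Fin n) (Fin n) ℝ) (μ : ℝ) (x : Fin n → ℝ) :
    x ⬝ᵥ (A + μ • B).mulVec x = x ⬝ᵥ A.mulVec x + μ * (x ⬝ᵥ B.mulVec x) := by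
  rw [add_mulVec, smul_mulVec, dotProduct_add, dotProduct_smul, smul_eq_mul]

private lemma finsler_pair {n : ℕ} (A B : Matrix (Fin n) (Fin n) ℝ) (hA : Aᵀ = A) (hB : Bᵀ = B)
    (h : ∀ x : Fin n → ℝ, x ≠ 0 → x ⬝ᵥ B.mulVec x = 0 → 0 < x ⬝ᵥ A.mulVec x)
    (x y : Fin n → ℝ) (hx : x ≠ 0) (hy : y ≠ 0)
    (hgx : 0 < x ⬝ᵥ B.mulVec x) (hgy : y ⬝ᵥ B.mulVec y < 0) :
    -(x ⬝ᵥ A.mulVec x) / (x ⬝ᵥ B.mulVec x) < -(y ⬝ᵥ A.mulVec y) / (y ⬝ᵥ B.mulVec y) := by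
  by_contra hc
  push_neg at hc
  set μ : ℝ := -(x ⬝ᵥ A.mulVec x) / (x ⬝ᵥ B.mulVec x) with hμ
  set C : Matrix (Fin n) (Fin n) ℝ := A + μ • B with hCdef
  have hC : Cᵀ = C := by rw [hCdef, transpose_add, transpose_smul, hA, hB]
  have hQx : x ⬝ᵥ C.mulVec x = 0 := by
    rw [hCdef, qf_addsmul, hμ]
    field_simp
    ring
  have hQy : y ⬝ᵥ C.mulVec y ≤ 0 := by
    rw [hCdef, qf_addsmul]
    have h1 : μ * (y ⬝ᵥ B.mulVec y) ≤ (-(y ⬝ᵥ A.mulVec y) / (y ⬝ᵥ B.mulVec y)) * (y ⬝ᵥ B.mulVec y) :=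
      mul_le_mul_of_nonpos_right hc (le_of_lt hgy)
    rw [div_mul_cancel₀ _ (ne_of_lt hgy)] at h1
    linarith
  -- choose z = ±y with nonpositive cross term
  obtain ⟨z, hz0, hgz, hQz, hcross⟩ :
      ∃ z : Fin n → ℝ, z ≠ 0 ∧ z ⬝ᵥ B.mulVec z < 0 ∧ z ⬝ᵥ C.mulVec z ≤ 0 ∧
        x ⬝ᵥ C.mulVec z ≤ 0 := by
    rcases le_or_gt (x ⬝ᵥ C.mulVec y) 0 with hxy | hxy
    · exact ⟨y, hy, hgy, hQy, hxy⟩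
    · refine ⟨-y, neg_ne_zero.2 hy, ?_, ?_, ?_⟩
      · simpa [mulVec_neg] using hgy
      · simpa [mulVec_neg] using hQy
      · simp only [mulVec_neg, dotProduct_neg]
        linarith
  -- IVT along the segment from x to z
  have hcontseg : Continuous fun t : ℝ => (1 - t) • x + t • z := by fun_prop
  set φ : ℝ → ℝ := fun t => ((1 - t) • x + t • z) ⬝ᵥ B.mulVec ((1 - t) • x + t • z) with hφ
  have hφc : Continuous φ := (qf_cont B).comp hcontseg
  have hφ0 : φ 0 = x ⬝ᵥ B.mulVec x := by simp [hφ]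
  have hφ1 : φ 1 = z ⬝ᵥ B.mulVec z := by simp [hφ]
  have h0m : (0 : ℝ) ∈ Set.Icc (φ 1) (φ 0) := by
    rw [hφ0, hφ1]; exact ⟨le_of_lt hgz, le_of_lt hgx⟩
  obtain ⟨t, htI, hφt⟩ := intermediate_value_Icc' (by norm_num : (0:ℝ) ≤ 1) hφc.continuousOn h0m
  set w : Fin n → ℝ := (1 - t) • x + t • z with hw
  have hgw : w ⬝ᵥ B.mulVec w = 0 := hφt
  have hw0 : w ≠ 0 := by
    intro hweq
    rcases eq_or_lt_of_le htI.1 with ht0 | ht0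
    · rw [hw, ← ht0] at hweq; simp at hweq; exact hx hweq
    rcases eq_or_lt_of_le htI.2 with ht1 | ht1
    · rw [hw, ht1] at hweq; simp at hweq; exact hz0 hweq
    · have h1t : (0:ℝ) < 1 - t := by linarith
      have hxz : x = ((1 - t)⁻¹ * (-t)) • z := by
        have h2 : (1 - t) • x = (-t) • z := by
          linear_combination (norm := module) hweq
        rw [mul_smul, ← h2, smul_smul, inv_mul_cancel₀ (ne_of_gt h1t), one_smul]
      have hgx2 : x ⬝ᵥ B.mulVec x = ((1 - t)⁻¹ * (-t))^2 * (z ⬝ᵥ B.mulVec z) := by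
        conv_lhs => rw [hxz]
        rw [qf_smul]
      nlinarith [sq_nonneg ((1 - t)⁻¹ * (-t))]
  have hfw : 0 < w ⬝ᵥ A.mulVec w := h w hw0 hgw
  have hQw : 0 < w ⬝ᵥ C.mulVec w := by
    rw [hCdef, qf_addsmul, hgw]; linarith
  have hexp : w ⬝ᵥ C.mulVec w
      = (1-t)^2 * (x ⬝ᵥ C.mulVec x) + (1-t)*t*(x ⬝ᵥ C.mulVec z) + (1-t)*t*(z ⬝ᵥ C.mulVec x)
        + t^2 * (z ⬝ᵥ C.mulVec z) := qf_expand C (1-t) t x z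
  have hsymzx : z ⬝ᵥ C.mulVec x = x ⬝ᵥ C.mulVec z := qf_sym C hC z x
  have htt : 0 ≤ (1 - t) * t := mul_nonneg (by linarith [htI.2]) htI.1
  nlinarith [sq_nonneg (1 - t), sq_nonneg t, mul_nonpos_of_nonneg_of_nonpos htt hcross,
    mul_nonneg (sq_nonneg t) (neg_nonneg.2 hQz)]

private lemma finsler_attain {n : ℕ} (f g : (Fin n → ℝ) → ℝ) (hf : Continuous f)
    (hg : Continuous g) (h : ∀ x : Fin n → ℝ, x ≠ 0 → g x = 0 → 0 < f x)
    (x₀ : Fin n → ℝ) (hx₀S : ‖x₀‖ = 1) (hgx₀ : 0 < g x₀) :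
    ∃ z : Fin n → ℝ, ‖z‖ = 1 ∧ 0 < g z ∧
      ∀ x : Fin n → ℝ, ‖x‖ = 1 → 0 < g x → -f x / g x ≤ -f z / g z := by
  set c₀ : ℝ := -f x₀ / g x₀ with hc₀
  set K : Set (Fin n → ℝ) :=
    Metric.sphere (0 : Fin n → ℝ) 1 ∩ {x | f x + c₀ * g x ≤ 0 ∧ 0 ≤ g x} with hK
  have hKc : IsCompact K := (isCompact_sphere _ _).inter_right
    ((isClosed_le (hf.add (continuous_const.mul hg)) continuous_const).inter
      (isClosed_le continuous_const hg))
  have hmem : ∀ x : Fin n → ℝ, x ∈ K ↔ ‖x‖ = 1 ∧ f x + c₀ * g x ≤ 0 ∧ 0 ≤ g x := by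
    intro x
    rw [hK, Set.mem_inter_iff, mem_sphere_zero_iff_norm, Set.mem_setOf_eq]
  have hx₀K : x₀ ∈ K := by
    rw [hmem]
    refine ⟨hx₀S, ?_, le_of_lt hgx₀⟩
    rw [hc₀, div_mul_cancel₀ _ (ne_of_gt hgx₀)]
    simp
  have hKpos : ∀ x ∈ K, 0 < g x := by
    intro x hxK
    rw [hmem] at hxK
    rcases lt_or_eq_of_le hxK.2.2 with h1 | h1
    · exact h1
    · exfalso
      have hx0 : x ≠ 0 := fun hh => by simp [hh] at hxK
      have := h x hx0 h1.symm
      rw [← h1, mul_zero, add_zero] at hxK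
      linarith [hxK.2.1]
  have hcont : ContinuousOn (fun x => -f x / g x) K :=
    (hf.neg.continuousOn).div hg.continuousOn (fun x hx => ne_of_gt (hKpos x hx))
  obtain ⟨z, hzK, hmax⟩ := hKc.exists_isMaxOn ⟨x₀, hx₀K⟩ hcont
  have hzS : ‖z‖ = 1 := ((hmem z).1 hzK).1
  have hgz : 0 < g z := hKpos z hzK
  refine ⟨z, hzS, hgz, ?_⟩
  intro x hxS hgx
  by_cases hxK : f x + c₀ * g x ≤ 0
  · exact hmax ((hmem x).2 ⟨hxS, hxK, le_of_lt hgx⟩)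
  · push_neg at hxK
    have h1 : -f x / g x < c₀ := by
      rw [div_lt_iff₀ hgx]
      linarith
    have h2 : c₀ ≤ -f z / g z := by
      have := hmax hx₀K
      simpa [hc₀] using this
    linarith

theorem stmt1 {n : ℕ} (A B : Matrix (Fin n) (Fin n) ℝ) (hA : Aᵀ = A) (hB : Bᵀ = B) :
    (∀ x : Fin n → ℝ, x ≠ 0 → x ⬝ᵥ B.mulVec x = 0 → 0 < x ⬝ᵥ A.mulVec x) ↔
    (∃ μ : ℝ, ∀ x : Fin n → ℝ, x ≠ 0 → 0 < x ⬝ᵥ (A + μ • B).mulVec x) := by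
  constructor
  · intro h
    suffices hs : ∃ μ : ℝ, ∀ x : Fin n → ℝ, ‖x‖ = 1 →
        0 < x ⬝ᵥ A.mulVec x + μ * (x ⬝ᵥ B.mulVec x) by
      obtain ⟨μ, hμ⟩ := hs
      refine ⟨μ, fun x hx => ?_⟩
      rw [qf_addsmul]
      have hn : ‖x‖ ≠ 0 := norm_ne_zero_iff.2 hx
      have h1 : ‖(‖x‖⁻¹ • x)‖ = 1 := by
        rw [norm_smul, norm_inv, norm_norm, inv_mul_cancel₀ hn]
      have h2 := hμ _ h1
      rw [qf_smul, qf_smul] at h2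
      have h3 : 0 < (‖x‖⁻¹)^2 := by positivity
      nlinarith
    have hnz : ∀ x : Fin n → ℝ, ‖x‖ = 1 → x ≠ 0 := by
      intro x hxS hh
      rw [hh, norm_zero] at hxS
      exact one_ne_zero hxS.symm
    by_cases hGp : ∃ x : Fin n → ℝ, ‖x‖ = 1 ∧ 0 < x ⬝ᵥ B.mulVec x
    · obtain ⟨x₀, hx₀S, hx₀g⟩ := hGp
      obtain ⟨zp, hzpS, hzpg, hzpmax⟩ := finsler_attain (fun x => x ⬝ᵥ A.mulVec x)
        (fun x => x ⬝ᵥ B.mulVec x) (qf_cont A) (qf_cont B) h x₀ hx₀S hx₀g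
      set s : ℝ := -(zp ⬝ᵥ A.mulVec zp) / (zp ⬝ᵥ B.mulVec zp) with hs
      by_cases hGm : ∃ y : Fin n → ℝ, ‖y‖ = 1 ∧ y ⬝ᵥ B.mulVec y < 0
      · obtain ⟨y₀, hy₀S, hy₀g⟩ := hGm
        obtain ⟨zm, hzmS, hzmg, hzmmax⟩ := finsler_attain (fun x => x ⬝ᵥ A.mulVec x)
          (fun x => -(x ⬝ᵥ B.mulVec x)) (qf_cont A) (qf_cont B).neg
          (fun x hx hgx => h x hx (neg_eq_zero.1 hgx)) y₀ hy₀S (by simpa using hy₀g)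
        have hzm0 : zm ⬝ᵥ B.mulVec zm < 0 := by linarith
        set i : ℝ := -(zm ⬝ᵥ A.mulVec zm) / (zm ⬝ᵥ B.mulVec zm) with hi
        have hsi : s < i :=
          finsler_pair A B hA hB h zp zm (hnz zp hzpS) (hnz zm hzmS) hzpg hzm0
        refine ⟨(s + i) / 2, fun x hxS => ?_⟩
        rcases lt_trichotomy (x ⬝ᵥ B.mulVec x) 0 with hgx | hgx | hgx
        · have hle := hzmmax x hxS (by linarith)
          rw [div_neg, div_neg, neg_le_neg_iff] at hle
          have hlt : (s + i) / 2 < -(x ⬝ᵥ A.mulVec x) / (x ⬝ᵥ B.mulVec x) := by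
            rw [← hi] at hle; linarith
          have := mul_lt_mul_of_neg_right hlt hgx
          rw [div_mul_cancel₀ _ (ne_of_lt hgx)] at this
          linarith
        · rw [hgx, mul_zero, add_zero]
          exact h x (hnz x hxS) hgx
        · have hle := hzpmax x hxS hgx
          have hlt : -(x ⬝ᵥ A.mulVec x) / (x ⬝ᵥ B.mulVec x) < (s + i) / 2 := by
            linarith
          rw [div_lt_iff₀ hgx] at hlt
          linarith
      · push_neg at hGm
        refine ⟨s + 1, fun x hxS => ?_⟩
        have hg0 : 0 ≤ x ⬝ᵥ B.mulVec x := hGm x hxS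
        rcases eq_or_lt_of_le hg0 with hgx | hgx
        · rw [← hgx, mul_zero, add_zero]
          exact h x (hnz x hxS) hgx.symm
        · have hle := hzpmax x hxS hgx
          have hlt : -(x ⬝ᵥ A.mulVec x) / (x ⬝ᵥ B.mulVec x) < s + 1 := by
            linarith
          rw [div_lt_iff₀ hgx] at hlt
          linarith
    · push_neg at hGp
      by_cases hGm : ∃ y : Fin n → ℝ, ‖y‖ = 1 ∧ y ⬝ᵥ B.mulVec y < 0
      · obtain ⟨y₀, hy₀S, hy₀g⟩ := hGm
        obtain ⟨zm, hzmS, hzmg, hzmmax⟩ := finsler_attain (fun x => x ⬝ᵥ A.mulVec x)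
          (fun x => -(x ⬝ᵥ B.mulVec x)) (qf_cont A) (qf_cont B).neg
          (fun x hx hgx => h x hx (neg_eq_zero.1 hgx)) y₀ hy₀S (by simpa using hy₀g)
        set i : ℝ := -(zm ⬝ᵥ A.mulVec zm) / (zm ⬝ᵥ B.mulVec zm) with hi
        refine ⟨i - 1, fun x hxS => ?_⟩
        have hg0 : x ⬝ᵥ B.mulVec x ≤ 0 := hGp x hxS
        rcases eq_or_lt_of_le hg0 with hgx | hgx
        · rw [hgx, mul_zero, add_zero]
          exact h x (hnz x hxS) hgx
        · have hle := hzmmax x hxS (by linarith)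
          rw [div_neg, div_neg, neg_le_neg_iff] at hle
          have hlt : i - 1 < -(x ⬝ᵥ A.mulVec x) / (x ⬝ᵥ B.mulVec x) := by
            rw [← hi] at hle; linarith
          have := mul_lt_mul_of_neg_right hlt hgx
          rw [div_mul_cancel₀ _ (ne_of_lt hgx)] at this
          linarith
      · push_neg at hGm
        refine ⟨0, fun x hxS => ?_⟩
        have hgx : x ⬝ᵥ B.mulVec x = 0 := le_antisymm (hGp x hxS) (hGm x hxS)
        rw [hgx, mul_zero, add_zero]
        exact h x (hnz x hxS) hgx
  · rintro ⟨μ, hμ⟩ x hx hgx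
    have := hμ x hx
    rw [qf_addsmul, hgx, mul_zero, add_zero] at this
    exact this
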